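/- The projective Reed-Solomon code PRS(q+1,k) has minimum distance q + 2 - k; in particular it is an MDS code of length q+1 and dimension k. -/

import Mathlib

open Polynomial

/-- Error distance of a word `u` to a code `C`: minimum Hamming distance to a codeword. -/
noncomputable def errDist {ι F : Type*} [Fintype ι] [DecidableEq F]
    (C : Set (ι → F)) (u : ι → F) : ℕ :=
  sInf (hammingDist u '' C)

/-- Covering radius of a code: maximum error distance over all words. -/
noncomputable def covRad {ι F : Type*} [Fintype ι] [DecidableEq F]
    (C : Set (ι → F)) : ℕ :=
  sSup (Set.range (errDist C))

/-- Minimum distance of a code: minimum Hamming weight of a nonzero codeword. -/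
noncomputable def minDist {ι F : Type*} [Fintype ι] [DecidableEq F] [Zero F]
    (C : Set (ι → F)) : ℕ :=
  sInf (hammingNorm '' (C \ {0}))

/-- Reed-Solomon code: evaluations of polynomials of degree `< k` at the points `x i`. -/
def RSCode (F : Type*) [Field F] {ι : Type*} (x : ι → F) (k : ℕ) : Set (ι → F) :=
  {u | ∃ f : F[X], f.degree < (k : WithBot ℕ) ∧ ∀ i, u i = f.eval (x i)}

/-- Projective Reed-Solomon code of length `q+1` (words indexed by `Option F`,
with `none` the point at infinity carrying the coefficient of `X^(k-1)`). -/
def PRSCode (F : Type*) [Field F] (k : ℕ) : Set (Option F → F) :=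
  {w | ∃ g : F[X], g.degree < (k : WithBot ℕ) ∧
    (∀ a : F, w (some a) = g.eval a) ∧ w none = g.coeff (k - 1)}

section PRSAux
open Finset
set_option linter.unusedSectionVars false

variable {F : Type*} [Field F] [Fintype F] [DecidableEq F]


variable {F : Type*} [Field F] [Fintype F] [DecidableEq F]

noncomputable def prsE (F : Type*) [Field F] (k : ℕ) (g : F[X]) : Option F → F :=
  fun o => o.elim (g.coeff (k-1)) (fun a => g.eval a)

lemma norm_prsE (k : ℕ) (g : F[X]) :
    hammingNorm (prsE F k g) = (univ.filter fun a : F => g.eval a ≠ 0).card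
      + (if g.coeff (k-1) ≠ 0 then 1 else 0) := by
  rw [hammingNorm, Finset.card_filter, Fintype.sum_option]
  simp [prsE, Finset.card_filter, add_comm]
  congr 1
  · split_ifs <;> simp_all
  · exact Finset.sum_congr rfl fun x _ => by split_ifs <;> simp_all

lemma weight_lower {k : ℕ} (hk1 : 1 ≤ k) (hk : k ≤ Fintype.card F)
    {g : F[X]} (hg0 : g ≠ 0) (hdeg : g.degree < (k:WithBot ℕ)) :
    Fintype.card F + 2 - k ≤ hammingNorm (prsE F k g) := by
  have hnd : g.natDegree < k := (natDegree_lt_iff_degree_lt hg0).mpr hdeg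
  have hZ : (univ.filter fun a : F => g.eval a = 0).card ≤ g.natDegree := by
    calc (univ.filter fun a : F => g.eval a = 0).card
        ≤ g.roots.toFinset.card := by
          apply Finset.card_le_card
          intro a ha
          simp only [Finset.mem_filter] at ha
          simp [Multiset.mem_toFinset, mem_roots hg0, IsRoot, ha.2]
      _ ≤ Multiset.card g.roots := Multiset.toFinset_card_le _
      _ ≤ g.natDegree := card_roots' g
  have hsplit := Finset.card_filter_add_card_filter_not
    (s := (univ : Finset F)) (p := fun a => g.eval a = 0)
  simp only [Finset.card_univ] at hsplit
  rw [norm_prsE]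
  simp only [ne_eq]
  by_cases hc : g.coeff (k-1) = 0
  · have hne : g.natDegree ≠ k - 1 := by
      intro h
      apply hg0
      rw [← leadingCoeff_eq_zero, leadingCoeff, h]
      exact hc
    rw [if_neg (by simpa using hc)]
    omega
  · rw [if_pos (by simpa using hc)]
    omega

lemma exists_min_word {k : ℕ} (hk1 : 1 ≤ k) (hk : k ≤ Fintype.card F) :
    ∃ g : F[X], g.degree < (k:WithBot ℕ) ∧ prsE F k g ≠ 0 ∧
      hammingNorm (prsE F k g) = Fintype.card F + 2 - k := by
  obtain ⟨s, -, hs⟩ := Finset.exists_subset_card_eq (s := (univ : Finset F)) (n := k-1)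
    (by simp; omega)
  set g : F[X] := ∏ a ∈ s, (X - C a) with hg
  have hmon : g.Monic := monic_prod_of_monic _ _ (fun a _ => monic_X_sub_C a)
  have hndeg : g.natDegree = k - 1 := by
    rw [hg, natDegree_prod _ _ (fun a _ => X_sub_C_ne_zero a)]
    simp [hs]
  have hcoeff : g.coeff (k-1) = 1 := by
    rw [← hndeg]; exact hmon.coeff_natDegree
  have hdeg : g.degree < (k : WithBot ℕ) := by
    rw [degree_eq_natDegree hmon.ne_zero, hndeg]
    exact_mod_cast Nat.sub_lt hk1 one_pos
  have heval : ∀ a : F, g.eval a = 0 ↔ a ∈ s := by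
    intro a
    rw [hg, eval_prod, Finset.prod_eq_zero_iff]
    constructor
    · rintro ⟨b, hb, hab⟩
      simp only [eval_sub, eval_X, eval_C, sub_eq_zero] at hab
      exact hab ▸ hb
    · intro ha
      exact ⟨a, ha, by simp⟩
  refine ⟨g, hdeg, ?_, ?_⟩
  · intro h
    have := congrFun h none
    simp [prsE, hcoeff] at this
  · rw [norm_prsE, hcoeff]
    have hfil : (univ.filter fun a : F => g.eval a ≠ 0) = sᶜ := by
      ext a
      simp [heval a]
    rw [hfil, Finset.card_compl, hs]
    simp only [ne_eq, one_ne_zero, not_false_eq_true, if_true]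
    omega

lemma poly_ext {k : ℕ} (hk : k ≤ Fintype.card F) {g₁ g₂ : F[X]}
    (h1 : g₁.degree < (k:WithBot ℕ)) (h2 : g₂.degree < (k:WithBot ℕ))
    (h : ∀ a : F, g₁.eval a = g₂.eval a) : g₁ = g₂ := by
  by_contra hne
  have hp : g₁ - g₂ ≠ 0 := sub_ne_zero.mpr hne
  have hdeg : (g₁ - g₂).natDegree < k := by
    have hd := lt_of_le_of_lt (degree_sub_le _ _) (max_lt h1 h2)
    exact (natDegree_lt_iff_degree_lt hp).mpr hd
  have hroots : (Finset.univ : Finset F) ⊆ (g₁ - g₂).roots.toFinset := by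
    intro a _
    simp [Multiset.mem_toFinset, mem_roots hp, IsRoot, h a]
  have h1' := Finset.card_le_card hroots
  have h2' := Multiset.toFinset_card_le (g₁ - g₂).roots
  have h3 := card_roots' (g₁ - g₂)
  simp [Finset.card_univ] at h1'
  omega

lemma prs_eq_image (k : ℕ) :
    PRSCode F k = prsE F k '' {g : F[X] | g.degree < (k : WithBot ℕ)} := by
  ext w
  constructor
  · rintro ⟨g, hg, h1, h2⟩
    refine ⟨g, hg, ?_⟩
    funext o
    cases o with
    | none => exact h2.symm
    | some a => exact (h1 a).symm
  · rintro ⟨g, hg, rfl⟩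
    exact ⟨g, hg, fun a => rfl, rfl⟩


end PRSAux

/-- `PRS(q+1,k)` has minimum distance `q + 2 - k`; it is an MDS code of length `q+1`
and dimension `k` (so it has `q^k` codewords). -/
theorem prs_mds {F : Type*} [Field F] [Fintype F] [DecidableEq F] {k : ℕ}
    (hk1 : 1 ≤ k) (hk : k ≤ Fintype.card F) :
    minDist (PRSCode F k) = Fintype.card F + 2 - k ∧
      (PRSCode F k).ncard = Fintype.card F ^ k := by
  have hinj : Set.InjOn (prsE F k) {g : F[X] | g.degree < (k : WithBot ℕ)} := by
    intro g₁ h1 g₂ h2 he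
    exact poly_ext hk h1 h2 (fun a => congrFun he (some a))
  constructor
  · -- min distance
    obtain ⟨g, hgdeg, hgne, hgnorm⟩ := exists_min_word (F := F) hk1 hk
    have hmem : hammingNorm (prsE F k g) ∈ hammingNorm '' (PRSCode F k \ {0}) := by
      refine ⟨prsE F k g, ⟨⟨g, hgdeg, fun a => rfl, rfl⟩, hgne⟩, rfl⟩
    refine le_antisymm ?_ ?_
    · rw [← hgnorm]
      exact Nat.sInf_le hmem
    · apply le_csInf ⟨_, hmem⟩
      rintro n ⟨w, ⟨⟨g', hg'deg, h1, h2⟩, hw0⟩, rfl⟩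
      have hwe : w = prsE F k g' := by
        funext o
        cases o with
        | none => exact h2
        | some a => exact h1 a
      have hg'0 : g' ≠ 0 := by
        rintro rfl
        apply hw0
        rw [hwe]
        funext o
        cases o <;> simp [prsE]
      rw [hwe]
      exact weight_lower hk1 hk hg'0 hg'deg
  · -- cardinality
    rw [prs_eq_image, Set.ncard_image_of_injOn hinj]
    have hset : {g : F[X] | g.degree < (k : WithBot ℕ)} = ↑(degreeLT F k) := by
      ext g; simp [Polynomial.mem_degreeLT]
    rw [hset]
    rw [← Nat.card_coe_set_eq, SetLike.coe_sort_coe]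
    rw [Nat.card_congr (Polynomial.degreeLTEquiv F k).toEquiv]
    rw [Nat.card_eq_fintype_card, Fintype.card_fun]
    simp
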